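/- Let γ > 0, E ∈ ℝ with E ≤ (γ^2/2)J(0), and let J : [0, T) → [0, ∞) be C^2 satisfying the integral identity J(t) = C sin(2γt + β) + E/γ^2 + ∫_0^t (sin(2γ(t−s))/(2γ)) f(s) ds, where f(s) ≤ 0 for all s, C ≥ |E|/γ^2, C sin β ≥ 0, β ∈ (0, π). Then J(t) ≤ C sin(2γt + β) + E/γ^2 fails to stay nonnegative beyond time 3π/(4γ); i.e., there exists T_* ≤ 3π/(4γ) with J(T_*) = 0. -/

import Mathlib

open MeasureTheory intervalIntegral

/-- Inhomogeneous virial argument: if a nonnegative `J` satisfies the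
variation-of-parameters identity `J(t) = C sin(2γt+β) + E/γ² + ∫₀ᵗ sin(2γ(t−s))/(2γ) f(s) ds`
with `f ≤ 0`, `C ≥ |E|/γ²`, `C sin β ≥ 0` and `β ∈ (0,π)`, then `J` vanishes at some
time `T_* ≤ 3π/(4γ)`. -/
theorem stmt_15 (γ E C β T : ℝ) (hγ : 0 < γ)
    (hT : 3 * Real.pi / (4 * γ) < T)
    (hC : |E| / γ ^ 2 ≤ C) (hβ : β ∈ Set.Ioo 0 Real.pi)
    (hCs : 0 ≤ C * Real.sin β)
    (J f : ℝ → ℝ) (hJC : ContDiff ℝ 2 J)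
    (hnonneg : ∀ t ∈ Set.Ico (0 : ℝ) T, 0 ≤ J t)
    (hf : ∀ s ∈ Set.Ico (0 : ℝ) T, f s ≤ 0)
    (hE : E ≤ γ ^ 2 / 2 * J 0)
    (hid : ∀ t ∈ Set.Ico (0 : ℝ) T,
      J t = C * Real.sin (2 * γ * t + β) + E / γ ^ 2 +
        ∫ s in (0 : ℝ)..t, Real.sin (2 * γ * (t - s)) / (2 * γ) * f s) :
    ∃ T', 0 ≤ T' ∧ T' ≤ 3 * Real.pi / (4 * γ) ∧ J T' = 0 := by
  have hπ : 0 < Real.pi := Real.pi_pos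
  set t₀ : ℝ := Real.pi / (2 * γ) with ht₀
  have ht₀pos : 0 < t₀ := div_pos hπ (by linarith)
  have ht₀le : t₀ ≤ 3 * Real.pi / (4 * γ) := by
    rw [div_le_div_iff₀ (by linarith) (by linarith)]
    nlinarith
  have ht₀T : t₀ < T := lt_of_le_of_lt ht₀le hT
  have hTpos : (0 : ℝ) < T := lt_trans (by positivity) hT
  -- J 0 = C sin β + E/γ²
  have hJ0 : J 0 = C * Real.sin β + E / γ ^ 2 := by
    have := hid 0 ⟨le_refl _, hTpos⟩
    simpa using this
  -- E/γ² ≤ C sin β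
  have hkey : E / γ ^ 2 ≤ C * Real.sin β := by
    rw [hJ0] at hE
    have h1 : γ ^ 2 * (E / γ ^ 2) = E := mul_div_cancel₀ E (by positivity)
    rw [div_le_iff₀ (by positivity)]
    nlinarith [h1]
  -- the argument of sin at t₀
  have hγne : (2 : ℝ) * γ ≠ 0 := by positivity
  have harg : 2 * γ * t₀ = Real.pi := by
    rw [ht₀]; exact mul_div_cancel₀ _ hγne
  -- integral term is nonpositive
  have hint : (∫ s in (0 : ℝ)..t₀, Real.sin (2 * γ * (t₀ - s)) / (2 * γ) * f s) ≤ 0 := by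
    have h : 0 ≤ ∫ s in (0:ℝ)..t₀, -(Real.sin (2 * γ * (t₀ - s)) / (2 * γ) * f s) := by
      apply intervalIntegral.integral_nonneg (le_of_lt ht₀pos)
      intro u hu
      have hu0 : 0 ≤ u := hu.1
      have hut : u ≤ t₀ := hu.2
      have hsin : 0 ≤ Real.sin (2 * γ * (t₀ - u)) := by
        apply Real.sin_nonneg_of_nonneg_of_le_pi
        · nlinarith
        · nlinarith
      have hfu : f u ≤ 0 := hf u ⟨hu0, lt_of_le_of_lt hut ht₀T⟩
      have : Real.sin (2 * γ * (t₀ - u)) / (2 * γ) * f u ≤ 0 :=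
        mul_nonpos_of_nonneg_of_nonpos (by positivity) hfu
      linarith
    rw [intervalIntegral.integral_neg] at h
    linarith [h]
  -- sin at t₀
  have hsin : Real.sin (2 * γ * t₀ + β) = -Real.sin β := by
    rw [harg]
    simp [Real.sin_add]
  have hJt₀ : J t₀ ≤ 0 := by
    have := hid t₀ ⟨le_of_lt ht₀pos, ht₀T⟩
    rw [this, hsin]
    nlinarith
  refine ⟨t₀, le_of_lt ht₀pos, ht₀le, le_antisymm hJt₀ (hnonneg t₀ ⟨le_of_lt ht₀pos, ht₀T⟩)⟩
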